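/- Let X be a Poisson random variable with parameter θ > 0. Then for every integer k, the total variation distance between the law of X and the law of X + k is at most |k|/√θ. -/

import Mathlib

open MeasureTheory Real

namespace TVPoisson

open scoped Classical

variable (θ : ℝ)

noncomputable def pr (n : ℕ) : ℝ := rexp (-θ) * θ ^ n / n.factorial

lemma pr_nonneg (hθ : 0 < θ) (n : ℕ) : 0 ≤ pr θ n := by
  unfold pr; positivity

lemma pr_hasSum : HasSum (pr θ) 1 := by
  unfold pr
  apply (hasSum_mul_left_iff (exp_ne_zero θ)).mp
  simp only [mul_one]
  have : (fun i ↦ rexp θ * (rexp (-θ) * θ ^ i / (Nat.factorial i : ℝ))) =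
      fun i ↦ θ ^ i / (Nat.factorial i : ℝ) := by
    ext n
    rw [mul_div_assoc, exp_neg, ← mul_assoc, ← div_eq_mul_inv, div_self (exp_ne_zero θ), one_mul]
  rw [this, exp_eq_exp_ℝ]
  exact NormedSpace.expSeries_div_hasSum_exp θ

lemma pr_summable : Summable (pr θ) := (pr_hasSum θ).summable

lemma pr_tsum : ∑' n, pr θ n = 1 := (pr_hasSum θ).tsum_eq

lemma pr_succ (n : ℕ) : ((n : ℝ) + 1) * pr θ (n + 1) = θ * pr θ n := by
  unfold pr
  rw [Nat.factorial_succ]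
  push_cast
  field_simp
  ring

lemma summable_mul_pr : Summable (fun n : ℕ => (n : ℝ) * pr θ n) := by
  rw [← summable_nat_add_iff 1]
  have : (fun n : ℕ => ((n + 1 : ℕ) : ℝ) * pr θ (n + 1)) = fun n => θ * pr θ n := by
    ext n; push_cast; exact pr_succ θ n
  rw [this]
  exact (pr_summable θ).mul_left θ

lemma tsum_mul_pr : ∑' n : ℕ, (n : ℝ) * pr θ n = θ := by
  rw [Summable.tsum_eq_zero_add (summable_mul_pr θ)]
  simp only [Nat.cast_zero, zero_mul, zero_add]
  have : (fun n : ℕ => ((n : ℕ) + 1 : ℝ) * pr θ (n + 1)) = fun n : ℕ => θ * pr θ n := by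
    ext n; exact pr_succ θ n
  push_cast
  rw [this, tsum_mul_left, pr_tsum, mul_one]

lemma summable_mul2_pr : Summable (fun n : ℕ => (n : ℝ) * ((n : ℝ) - 1) * pr θ n) := by
  rw [← summable_nat_add_iff 2]
  have : (fun n : ℕ => ((n + 2 : ℕ) : ℝ) * (((n + 2 : ℕ) : ℝ) - 1) * pr θ (n + 2)) =
      fun n => θ * (θ * pr θ n) := by
    ext n
    push_cast
    have h1 := pr_succ θ (n + 1)
    have h2 := pr_succ θ n
    push_cast at h1 h2
    have hn1 : ((n : ℝ) + 1) ≠ 0 := by positivity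
    have hn2 : ((n : ℝ) + 2) ≠ 0 := by positivity
    have : pr θ (n + 2) = θ * pr θ (n+1) / ((n:ℝ) + 2) := by
      rw [← h1]; field_simp; ring
    rw [this]
    have : pr θ (n + 1) = θ * pr θ n / ((n:ℝ) + 1) := by
      rw [← h2]; field_simp
    rw [this]
    field_simp
    ring
  rw [this]
  exact ((pr_summable θ).mul_left θ).mul_left θ

lemma tsum_mul2_pr : ∑' n : ℕ, (n : ℝ) * ((n : ℝ) - 1) * pr θ n = θ ^ 2 := by
  have key : (fun n : ℕ => ((n + 2 : ℕ) : ℝ) * (((n + 2 : ℕ) : ℝ) - 1) * pr θ (n + 2)) =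
      fun n => θ * (θ * pr θ n) := by
    ext n
    push_cast
    have h1 := pr_succ θ (n + 1)
    have h2 := pr_succ θ n
    push_cast at h1 h2
    have hn1 : ((n : ℝ) + 1) ≠ 0 := by positivity
    have hn2 : ((n : ℝ) + 2) ≠ 0 := by positivity
    have e1 : pr θ (n + 2) = θ * pr θ (n+1) / ((n:ℝ) + 2) := by
      rw [← h1]; field_simp; ring
    rw [e1]
    have e2 : pr θ (n + 1) = θ * pr θ n / ((n:ℝ) + 1) := by
      rw [← h2]; field_simp
    rw [e2]
    field_simp
    ring
  rw [Summable.tsum_eq_zero_add (summable_mul2_pr θ)]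
  rw [Summable.tsum_eq_zero_add ((summable_nat_add_iff 1).mpr (summable_mul2_pr θ))]
  push_cast
  have : (fun n : ℕ => ((n:ℝ) + 1 + 1) * ((n:ℝ) + 1 + 1 - 1) * pr θ (n + 1 + 1)) =
      fun n => θ * (θ * pr θ n) := by
    ext n
    have := congrFun key n
    push_cast at this
    convert this using 2 <;> ring
  rw [this, tsum_mul_left, tsum_mul_left, pr_tsum]
  ring

lemma summable_sq_pr : Summable (fun n : ℕ => pr θ n * ((n : ℝ) - θ) ^ 2) := by
  have : (fun n : ℕ => pr θ n * ((n : ℝ) - θ) ^ 2) =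
      fun n : ℕ => (n : ℝ) * ((n : ℝ) - 1) * pr θ n + (1 - 2*θ) * ((n:ℝ) * pr θ n)
        + θ^2 * pr θ n := by
    ext n; ring
  rw [this]
  exact (((summable_mul2_pr θ).add ((summable_mul_pr θ).mul_left _)).add
    ((pr_summable θ).mul_left _))

lemma tsum_sq_pr : ∑' n : ℕ, pr θ n * ((n : ℝ) - θ) ^ 2 = θ := by
  have : (fun n : ℕ => pr θ n * ((n : ℝ) - θ) ^ 2) =
      fun n : ℕ => (n : ℝ) * ((n : ℝ) - 1) * pr θ n + (1 - 2*θ) * ((n:ℝ) * pr θ n)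
        + θ^2 * pr θ n := by
    ext n; ring
  rw [this, Summable.tsum_add (((summable_mul2_pr θ).add ((summable_mul_pr θ).mul_left _)))
    ((pr_summable θ).mul_left _),
    Summable.tsum_add (summable_mul2_pr θ) ((summable_mul_pr θ).mul_left _),
    tsum_mul_left, tsum_mul_left, tsum_mul2_pr, tsum_mul_pr, pr_tsum]
  ring


lemma summable_abs_pr (hθ : 0 < θ) : Summable (fun n : ℕ => pr θ n * |(n : ℝ) - θ|) := by
  have hsum : Summable (fun n : ℕ => pr θ n + pr θ n * ((n:ℝ) - θ)^2) :=
    (pr_summable θ).add (summable_sq_pr θ)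
  refine Summable.of_nonneg_of_le
    (fun n => mul_nonneg (pr_nonneg θ hθ n) (abs_nonneg _)) (fun n => ?_) hsum
  have h1 : |(n : ℝ) - θ| ≤ 1 + ((n:ℝ) - θ)^2 := by
    nlinarith [abs_nonneg ((n:ℝ) - θ), sq_abs ((n:ℝ) - θ), sq_nonneg (|(n:ℝ) - θ| - 1)]
  have := pr_nonneg θ hθ n
  nlinarith

lemma tsum_abs_pr_le (hθ : 0 < θ) : ∑' n : ℕ, pr θ n * |(n : ℝ) - θ| ≤ Real.sqrt θ := by
  refine le_of_tendsto' (summable_abs_pr θ hθ).hasSum (fun s => ?_)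
  have key : ∑ n ∈ s, pr θ n * |(n : ℝ) - θ|
      = ∑ n ∈ s, Real.sqrt (pr θ n) * Real.sqrt (pr θ n * ((n:ℝ) - θ)^2) := by
    refine Finset.sum_congr rfl (fun n _ => ?_)
    rw [Real.sqrt_mul (pr_nonneg θ hθ n), Real.sqrt_sq_eq_abs, ← mul_assoc,
      Real.mul_self_sqrt (pr_nonneg θ hθ n)]
  rw [key]
  calc ∑ n ∈ s, Real.sqrt (pr θ n) * Real.sqrt (pr θ n * ((n:ℝ) - θ)^2)
      ≤ Real.sqrt (∑ n ∈ s, pr θ n) * Real.sqrt (∑ n ∈ s, pr θ n * ((n:ℝ) - θ)^2) :=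
        Real.sum_sqrt_mul_sqrt_le s (fun n => pr_nonneg θ hθ n)
          (fun n => mul_nonneg (pr_nonneg θ hθ n) (sq_nonneg _))
    _ ≤ Real.sqrt 1 * Real.sqrt θ := by
        gcongr
        · exact Summable.sum_le_tsum s (fun n _ => pr_nonneg θ hθ n) (pr_summable θ) |>.trans
            (pr_tsum θ).le
        · exact Summable.sum_le_tsum s (fun n _ => mul_nonneg (pr_nonneg θ hθ n) (sq_nonneg _))
            (summable_sq_pr θ) |>.trans
            (tsum_sq_pr θ).le
    _ = Real.sqrt θ := by rw [Real.sqrt_one, one_mul]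

/-- Poisson pmf extended to the integers. -/
noncomputable def f (m : ℤ) : ℝ := if 0 ≤ m then pr θ m.toNat else 0

lemma f_nonneg (hθ : 0 < θ) (m : ℤ) : 0 ≤ f θ m := by
  unfold f; split
  · exact pr_nonneg θ hθ _
  · exact le_rfl

lemma f_summable : Summable (f θ) := by
  apply Summable.of_nat_of_neg
  · have : (fun n : ℕ => f θ (n : ℤ)) = pr θ := by
      ext n; simp [f]
    rw [this]; exact pr_summable θ
  · apply (summable_nat_add_iff 1).mp
    have : (fun n : ℕ => f θ (-(n + 1 : ℕ))) = fun _ => (0:ℝ) := by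
      ext n
      simp only [f]
      rw [if_neg]
      omega
    rw [this]
    exact summable_zero

lemma f_shift_summable (k : ℤ) : Summable (fun m : ℤ => f θ (m - k)) :=
  (Equiv.subRight k).summable_iff.mpr (f_summable θ) |>.congr (fun m => rfl)

noncomputable def D (k : ℤ) : ℝ := ∑' m : ℤ, |f θ m - f θ (m - k)|

lemma absdiff_summable (k : ℤ) : Summable (fun m : ℤ => |f θ m - f θ (m - k)|) :=
  ((f_summable θ).sub (f_shift_summable θ k)).abs

lemma D_one_le (hθ : 0 < θ) : D θ 1 ≤ 1 / Real.sqrt θ := by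
  have h1 : D θ 1 = ∑' n : ℕ, pr θ n * |(n:ℝ) - θ| / θ := by
    unfold D
    rw [← Function.Injective.tsum_eq (g := fun n : ℕ => (n : ℤ))
      (f := fun m : ℤ => |f θ m - f θ (m - 1)|) (fun a b h => Int.natCast_inj.mp h)]
    · apply tsum_congr
      intro n
      cases n with
      | zero =>
        have e1 : f θ ((0:ℕ):ℤ) = pr θ 0 := by simp [f]
        have e2 : f θ (((0:ℕ):ℤ) - 1) = 0 := by
          unfold f; rw [if_neg (by omega)]
        rw [e1, e2, sub_zero, abs_of_nonneg (pr_nonneg θ hθ 0), Nat.cast_zero, zero_sub,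
          abs_neg, abs_of_pos hθ]
        field_simp
      | succ n =>
        have e1 : f θ ((n+1:ℕ):ℤ) = pr θ (n+1) := by
          unfold f; rw [if_pos (by omega), Int.toNat_natCast]
        have e2 : f θ (((n+1:ℕ):ℤ) - 1) = pr θ n := by
          have h : ((n+1:ℕ):ℤ) - 1 = (n:ℤ) := by push_cast; ring
          rw [h]; simp [f]
        have hrec := pr_succ θ n
        have hps : pr θ (n+1) - pr θ n = pr θ (n+1) * (θ - ((n:ℝ)+1)) / θ := by
          have h : pr θ n = ((n:ℝ)+1) * pr θ (n+1) / θ := by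
            rw [hrec]; field_simp
          rw [h]; field_simp
        rw [e1, e2, hps, abs_div, abs_mul, abs_of_pos hθ, abs_of_nonneg (pr_nonneg θ hθ _),
          abs_sub_comm]
        push_cast
        ring
    · intro m hm
      simp only [Function.mem_support] at hm
      by_contra hr
      apply hm
      have hneg : m < 0 := by
        by_contra h
        push_neg at h
        exact hr ⟨m.toNat, by simp only []; omega⟩
      have : f θ m = 0 := by unfold f; rw [if_neg (by omega)]
      have h2 : f θ (m - 1) = 0 := by unfold f; rw [if_neg (by omega)]
      rw [this, h2, sub_zero, abs_zero]
  rw [h1]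
  have : ∀ n : ℕ, pr θ n * |(n:ℝ) - θ| / θ = (1/θ) * (pr θ n * |(n:ℝ) - θ|) := by
    intro n; field_simp
  rw [tsum_congr this, tsum_mul_left]
  calc (1/θ) * ∑' n : ℕ, pr θ n * |(n:ℝ) - θ| ≤ (1/θ) * Real.sqrt θ :=
        mul_le_mul_of_nonneg_left (tsum_abs_pr_le θ hθ) (by positivity)
    _ = 1 / Real.sqrt θ := by
        rw [div_mul_eq_mul_div, one_mul, div_eq_div_iff hθ.ne' (by positivity : (0:ℝ) < Real.sqrt θ).ne',
          one_mul, Real.mul_self_sqrt hθ.le]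


lemma shifted_absdiff_summable (k : ℤ) :
    Summable (fun m : ℤ => |f θ (m - 1) - f θ (m - 1 - k)|) :=
  ((Equiv.subRight 1).summable_iff.mpr (absdiff_summable θ k)).congr (fun m => rfl)

lemma shifted_absdiff_tsum (k : ℤ) :
    ∑' m : ℤ, |f θ (m - 1) - f θ (m - 1 - k)| = D θ k := by
  exact (Equiv.subRight 1).tsum_eq (fun m => |f θ m - f θ (m - k)|)

lemma D_succ (k : ℤ) : D θ (k + 1) ≤ D θ 1 + D θ k := by
  have hle : ∀ m : ℤ, |f θ m - f θ (m - (k+1))| ≤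
      |f θ m - f θ (m - 1)| + |f θ (m - 1) - f θ (m - 1 - k)| := by
    intro m
    have h : m - (k+1) = m - 1 - k := by ring
    rw [h]
    exact abs_sub_le _ _ _
  unfold D
  calc ∑' m : ℤ, |f θ m - f θ (m - (k+1))|
      ≤ ∑' m : ℤ, (|f θ m - f θ (m - 1)| + |f θ (m - 1) - f θ (m - 1 - k)|) :=
        Summable.tsum_le_tsum hle (absdiff_summable θ (k+1))
          ((absdiff_summable θ 1).add (shifted_absdiff_summable θ k))
    _ = (∑' m : ℤ, |f θ m - f θ (m - 1)|) + ∑' m : ℤ, |f θ (m - 1) - f θ (m - 1 - k)| :=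
        Summable.tsum_add (absdiff_summable θ 1) (shifted_absdiff_summable θ k)
    _ = (∑' m : ℤ, |f θ m - f θ (m - 1)|) + ∑' m : ℤ, |f θ m - f θ (m - k)| := by
        rw [shifted_absdiff_tsum θ k]; rfl

lemma D_neg (k : ℤ) : D θ (-k) = D θ k := by
  unfold D
  have := (Equiv.addRight k).tsum_eq (fun m : ℤ => |f θ m - f θ (m - k)|)
  rw [← this]
  apply tsum_congr
  intro m
  simp only [Equiv.coe_addRight, add_sub_cancel_right, sub_neg_eq_add]
  exact abs_sub_comm _ _

lemma D_zero : D θ 0 = 0 := by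
  unfold D
  simp

lemma D_le (hθ : 0 < θ) (k : ℤ) : D θ k ≤ |(k : ℝ)| / Real.sqrt θ := by
  have hnat : ∀ j : ℕ, D θ (j : ℤ) ≤ (j : ℝ) / Real.sqrt θ := by
    intro j
    induction j with
    | zero => simp [D_zero]
    | succ j ih =>
      have h1 : ((j:ℤ) + 1 : ℤ) = ((j+1 : ℕ) : ℤ) := by push_cast; ring
      calc D θ ((j+1 : ℕ) : ℤ) = D θ ((j:ℤ) + 1) := by rw [h1]
        _ ≤ D θ 1 + D θ j := D_succ θ j
        _ ≤ 1 / Real.sqrt θ + (j : ℝ) / Real.sqrt θ := add_le_add (D_one_le θ hθ) ih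
        _ = ((j+1 : ℕ) : ℝ) / Real.sqrt θ := by push_cast; ring
  obtain ⟨n, rfl | rfl⟩ := k.eq_nat_or_neg
  · calc D θ (n : ℤ) ≤ (n : ℝ) / Real.sqrt θ := hnat n
      _ = |((n:ℤ) : ℝ)| / Real.sqrt θ := by
        rw [abs_of_nonneg (by positivity)]; push_cast; ring
  · rw [D_neg]
    refine (hnat n).trans_eq ?_
    push_cast
    rw [abs_neg, abs_of_nonneg (by positivity)]


variable {Ω : Type*} [MeasurableSpace Ω] (μ : Measure Ω) [IsProbabilityMeasure μ]
  (X : Ω → ℕ)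

lemma map_toReal (hθ : 0 < θ) (hX : Measurable X)
    (hpois : ∀ n : ℕ, μ {ω | X ω = n} = ENNReal.ofReal (rexp (-θ) * θ ^ n / n.factorial))
    (k : ℤ) (A : Set ℤ) :
    ((μ.map (fun ω => (X ω : ℤ) + k)) A).toReal
      = ∑' m : ℤ, A.indicator (fun m => f θ (m - k)) m := by
  have hmeas : Measurable (fun ω => (X ω : ℤ) + k) :=
    (measurable_from_top (f := fun n : ℕ => (n : ℤ) + k)).comp hX
  have hA : MeasurableSet A := MeasurableSet.of_discrete
  rw [Measure.map_apply hmeas hA]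
  set T := (fun ω => (X ω : ℤ) + k) ⁻¹' A with hT
  have hpart : T = ⋃ n : ℕ, ({ω | X ω = n} ∩ T) := by
    ext ω
    simp only [Set.mem_iUnion, Set.mem_inter_iff, Set.mem_setOf_eq]
    exact ⟨fun h => ⟨X ω, rfl, h⟩, fun ⟨n, _, h⟩ => h⟩
  have hdisj : Pairwise (Function.onFun Disjoint fun n : ℕ => ({ω | X ω = n} ∩ T)) := by
    intro i j hij
    refine Set.disjoint_left.mpr ?_
    rintro ω ⟨hi, -⟩ ⟨hj, -⟩
    exact hij (hi ▸ hj ▸ rfl)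
  have hmeasn : ∀ n : ℕ, MeasurableSet ({ω | X ω = n} ∩ T) := fun n =>
    (hX (MeasurableSet.of_discrete (s := {n}))).inter (hmeas hA)
  rw [hpart, measure_iUnion hdisj hmeasn]
  have hterm : ∀ n : ℕ, μ ({ω | X ω = n} ∩ T)
      = ENNReal.ofReal (if ((n : ℤ) + k) ∈ A then pr θ n else 0) := by
    intro n
    by_cases hmem : ((n : ℤ) + k) ∈ A
    · rw [if_pos hmem]
      have : {ω | X ω = n} ∩ T = {ω | X ω = n} := by
        apply Set.inter_eq_left.mpr
        intro ω hω
        simp only [Set.mem_setOf_eq] at hω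
        simp only [hT, Set.mem_preimage, hω]
        exact hmem
      rw [this, hpois n]; rfl
    · rw [if_neg hmem]
      have : {ω | X ω = n} ∩ T = ∅ := by
        ext ω
        simp only [Set.mem_inter_iff, Set.mem_setOf_eq, Set.mem_empty_iff_false, iff_false]
        rintro ⟨hω, hωT⟩
        rw [hT] at hωT
        simp only [Set.mem_preimage, hω] at hωT
        exact hmem hωT
      rw [this]
      simp
  rw [tsum_congr hterm]
  have hnonneg : ∀ n : ℕ, 0 ≤ (if ((n : ℤ) + k) ∈ A then pr θ n else 0) := by
    intro n; split
    · exact pr_nonneg θ hθ n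
    · exact le_rfl
  have hsummable : Summable (fun n : ℕ => if ((n : ℤ) + k) ∈ A then pr θ n else 0) := by
    refine Summable.of_nonneg_of_le hnonneg (fun n => ?_) (pr_summable θ)
    split
    · exact le_rfl
    · exact pr_nonneg θ hθ n
  rw [← ENNReal.ofReal_tsum_of_nonneg hnonneg hsummable,
    ENNReal.toReal_ofReal (tsum_nonneg hnonneg)]
  have hinj : Function.Injective (fun n : ℕ => (n : ℤ) + k) := by
    intro a b h
    have h' : (a : ℤ) + k = (b : ℤ) + k := h
    omega
  have hsupp : Function.support (fun m : ℤ => A.indicator (fun m => f θ (m - k)) m)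
      ⊆ Set.range (fun n : ℕ => (n : ℤ) + k) := by
    intro m hm
    simp only [Function.mem_support, Set.indicator_apply] at hm
    have hfne : f θ (m - k) ≠ 0 := by
      by_cases h : m ∈ A
      · simpa [h] using hm
      · simp [h] at hm
    have h0 : 0 ≤ m - k := by
      by_contra h
      exact hfne (by unfold f; rw [if_neg (by omega)])
    exact ⟨(m - k).toNat, by simp only []; omega⟩
  rw [← Function.Injective.tsum_eq hinj hsupp]
  apply tsum_congr
  intro n
  simp only [Set.indicator_apply, add_sub_cancel_right]
  by_cases h : ((n : ℤ) + k) ∈ A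
  · rw [if_pos h, if_pos h]
    unfold f
    rw [if_pos (by omega), Int.toNat_natCast]
  · rw [if_neg h, if_neg h]


end TVPoisson

open TVPoisson

/-- Total variation distance between two measures. -/
noncomputable def tvDist {α : Type*} [MeasurableSpace α] (P Q : Measure α) : ℝ :=
  ⨆ A : {s : Set α // MeasurableSet s}, |(P A.1).toReal - (Q A.1).toReal|

/-- If `X` is Poisson(θ)-distributed, then the total variation distance between the law of `X`
and the law of `X + k` is at most `|k| / √θ`. -/
theorem tvDist_poisson_shift_le
    {Ω : Type*} [MeasurableSpace Ω] (μ : Measure Ω) [IsProbabilityMeasure μ]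
    (θ : ℝ) (hθ : 0 < θ) (X : Ω → ℕ) (hX : Measurable X)
    (hpois : ∀ n : ℕ, μ {ω | X ω = n} = ENNReal.ofReal (exp (-θ) * θ ^ n / n.factorial))
    (k : ℤ) :
    tvDist (μ.map (fun ω => (X ω : ℤ))) (μ.map (fun ω => (X ω : ℤ) + k))
      ≤ |(k : ℝ)| / Real.sqrt θ := by
  classical

  unfold tvDist
  have hne : Nonempty {s : Set ℤ // MeasurableSet s} := ⟨⟨∅, MeasurableSet.empty⟩⟩
  refine ciSup_le (fun A => ?_)
  have h0 : (fun ω => (X ω : ℤ)) = fun ω => (X ω : ℤ) + (0 : ℤ) := by ext ω; ring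
  have e1 : ((μ.map (fun ω => (X ω : ℤ))) A.1).toReal
      = ∑' m : ℤ, A.1.indicator (f θ) m := by
    rw [h0, map_toReal θ μ X hθ hX hpois 0 A.1]
    apply tsum_congr; intro m
    simp [Set.indicator_apply]
  have e2 : ((μ.map (fun ω => (X ω : ℤ) + k)) A.1).toReal
      = ∑' m : ℤ, A.1.indicator (fun m => f θ (m - k)) m :=
    map_toReal θ μ X hθ hX hpois k A.1
  rw [e1, e2]
  have hs1 : Summable (A.1.indicator (f θ)) := (f_summable θ).indicator A.1
  have hs2 : Summable (A.1.indicator (fun m : ℤ => f θ (m - k))) :=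
    (f_shift_summable θ k).indicator A.1
  rw [← Summable.tsum_sub hs1 hs2]
  have habs : Summable (fun m : ℤ =>
      ‖A.1.indicator (f θ) m - A.1.indicator (fun m : ℤ => f θ (m - k)) m‖) := by
    simpa [Real.norm_eq_abs] using (hs1.sub hs2).abs
  calc |∑' m : ℤ, (A.1.indicator (f θ) m - A.1.indicator (fun m : ℤ => f θ (m - k)) m)|
      ≤ ∑' m : ℤ, ‖A.1.indicator (f θ) m - A.1.indicator (fun m : ℤ => f θ (m - k)) m‖ := by
        rw [← Real.norm_eq_abs]
        exact norm_tsum_le_tsum_norm habs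
    _ ≤ ∑' m : ℤ, |f θ m - f θ (m - k)| := by
        refine Summable.tsum_le_tsum (fun m => ?_) (by simpa [Real.norm_eq_abs] using habs)
          (absdiff_summable θ k)
        rw [Real.norm_eq_abs, Set.indicator_apply, Set.indicator_apply]
        by_cases h : m ∈ A.1
        · simp only [if_pos h]; exact le_rfl
        · simp only [if_neg h, sub_zero, abs_zero]
          exact abs_nonneg _
    _ ≤ |(k : ℝ)| / Real.sqrt θ := D_le θ hθ k
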